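/- Let R be an unambiguous regex over Σ. Then the star R* is infinitely ambiguous if and only if ε ∈ L(R) or the languages L(R) and L(R*) overlap. (Paper's Theorem 3(a), Ambiguity of Star.) -/

import Mathlib

/-! Shared definitions: words, word power, parse trees of regular expressions,
(un)ambiguity, finite/infinite ambiguity, and the Brabrand–Thomsen overlap. -/

universe u

variable {α : Type u}

/-- `wpow w n` is the `n`-fold concatenation `w^n` of the word `w` with itself. -/
def wpow (w : List α) : ℕ → List α
  | 0 => []
  | n + 1 => w ++ wpow w n

/-- Parse trees of a regular expression for a word, defined inductively:
the regex `ε` has a unique parse tree for the empty word; the character regex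
for `a` has a unique parse tree for the word `[a]`; a parse tree of `R₁ + R₂`
(alternation) for `w` is a parse tree of `R₁` for `w` or a parse tree of `R₂`
for `w` (the two sides distinct); a parse tree of `R₁ * R₂` (concatenation)
for `w` is a decomposition `w = u ++ v` with parse trees of `R₁` for `u` and
of `R₂` for `v`; a parse tree of `R*` for `w` is a finite list of words
(possibly empty entries) concatenating to `w` with a parse tree of `R` for each. -/
inductive ParseTree : RegularExpression α → List α → Type u where
  | eps : ParseTree RegularExpression.epsilon []
  | char (a : α) : ParseTree (RegularExpression.char a) [a]
  | plusLeft {R₁ R₂ : RegularExpression α} {w : List α} :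
      ParseTree R₁ w → ParseTree (R₁ + R₂) w
  | plusRight {R₁ R₂ : RegularExpression α} {w : List α} :
      ParseTree R₂ w → ParseTree (R₁ + R₂) w
  | comp {R₁ R₂ : RegularExpression α} {u v : List α} :
      ParseTree R₁ u → ParseTree R₂ v → ParseTree (R₁ * R₂) (u ++ v)
  | starNil {R : RegularExpression α} : ParseTree R.star []
  | starCons {R : RegularExpression α} {u v : List α} :
      ParseTree R u → ParseTree R.star v → ParseTree R.star (u ++ v)

/-- A regex is unambiguous if every word has at most one parse tree of it. -/
def Unambiguous (R : RegularExpression α) : Prop :=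
  ∀ (w : List α) (t₁ t₂ : ParseTree R w), t₁ = t₂

/-- A regex is ambiguous if some word has two distinct parse trees of it. -/
def Ambiguous (R : RegularExpression α) : Prop :=
  ∃ (w : List α) (t₁ t₂ : ParseTree R w), t₁ ≠ t₂

/-- The word `w` has at least `k` distinct parse trees of `R`. -/
def HasAtLeastTrees (R : RegularExpression α) (w : List α) (k : ℕ) : Prop :=
  ∃ l : List (ParseTree R w), l.Nodup ∧ k ≤ l.length

/-- Every word has at most `k` parse trees of `R`. -/
def BoundedBy (R : RegularExpression α) (k : ℕ) : Prop :=
  ∀ (w : List α) (l : List (ParseTree R w)), l.Nodup → l.length ≤ k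

/-- `R` is finitely ambiguous: ambiguous, with a uniform bound on the number
of parse trees of any word. -/
def FinitelyAmbiguous (R : RegularExpression α) : Prop :=
  Ambiguous R ∧ ∃ k : ℕ, BoundedBy R k

/-- `R` is infinitely ambiguous: for every `k` some word has more than `k`
parse trees of `R`. -/
def InfinitelyAmbiguous (R : RegularExpression α) : Prop :=
  ∀ k : ℕ, ∃ w : List α, HasAtLeastTrees R w (k + 1)

/-- Languages `L₁` and `L₂` overlap (nonemptiness of the Brabrand–Thomsen
overlap operator): there are words `x`, `y` and a nonempty word `a` with
`x ∈ L₁`, `x ++ a ∈ L₁`, `a ++ y ∈ L₂`, and `y ∈ L₂`. -/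
def Overlaps (L₁ L₂ : Language α) : Prop :=
  ∃ x y a : List α, a ≠ [] ∧ x ∈ L₁ ∧ x ++ a ∈ L₁ ∧ a ++ y ∈ L₂ ∧ y ∈ L₂


theorem PT_toMatch {R : RegularExpression α} {w : List α} (t : ParseTree R w) : w ∈ R.matches' := by
  induction t with
  | eps => simp [RegularExpression.matches'_epsilon, Language.mem_one]
  | char a => rw [RegularExpression.matches'_char]; exact Set.mem_singleton _
  | plusLeft t ih => rw [RegularExpression.matches'_add]; exact Or.inl ih
  | plusRight t ih => rw [RegularExpression.matches'_add]; exact Or.inr ih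
  | comp t s iht ihs =>
      rw [RegularExpression.matches'_mul]
      exact Language.append_mem_mul iht ihs
  | starNil => rw [RegularExpression.matches'_star]; exact Language.nil_mem_kstar _
  | starCons t s iht ihs =>
      rw [RegularExpression.matches'_star]
      rw [RegularExpression.matches'_star, Language.mem_kstar] at ihs
      obtain ⟨L, rfl, hL⟩ := ihs
      rw [Language.mem_kstar]
      refine ⟨_ :: L, rfl, ?_⟩
      intro y hy
      rw [List.mem_cons] at hy
      rcases hy with rfl | hy
      · exact iht
      · exact hL _ hy

theorem PT_nonempty : ∀ (R : RegularExpression α) (w : List α), w ∈ R.matches' → Nonempty (ParseTree R w)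
  | RegularExpression.zero, w, hw => by simp [RegularExpression.matches'_zero] at hw
  | RegularExpression.epsilon, w, hw => by
      rw [show (RegularExpression.epsilon : RegularExpression α) = 1 from rfl,
        RegularExpression.matches'_epsilon, Language.mem_one] at hw
      exact hw ▸ ⟨.eps⟩
  | RegularExpression.char a, w, hw => by
      rw [RegularExpression.matches'_char] at hw
      replace hw : w = [a] := hw
      exact hw ▸ ⟨.char a⟩
  | RegularExpression.plus R₁ R₂, w, hw => by
      rw [show RegularExpression.plus R₁ R₂ = R₁ + R₂ from rfl, RegularExpression.matches'_add] at hw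
      rcases hw with hw | hw
      · exact ⟨.plusLeft (PT_nonempty R₁ w hw).some⟩
      · exact ⟨.plusRight (PT_nonempty R₂ w hw).some⟩
  | RegularExpression.comp R₁ R₂, w, hw => by
      rw [show RegularExpression.comp R₁ R₂ = R₁ * R₂ from rfl, RegularExpression.matches'_mul,
        Language.mem_mul] at hw
      obtain ⟨a, ha, b, hb, rfl⟩ := hw
      exact ⟨.comp (PT_nonempty R₁ a ha).some (PT_nonempty R₂ b hb).some⟩
  | RegularExpression.star R, w, hw => by
      rw [RegularExpression.matches'_star, Language.mem_kstar] at hw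
      obtain ⟨L, rfl, hL⟩ := hw
      revert hL
      induction L with
      | nil => exact fun _ => ⟨.starNil⟩
      | cons a L ih =>
          intro hL
          have h1 := (PT_nonempty R a (hL a (by simp))).some
          have h2 := (ih (fun y hy => hL y (by simp [hy]))).some
          exact ⟨.starCons h1 h2⟩

def castWord {R : RegularExpression α} {w w' : List α} (h : w = w') (t : ParseTree R w) :
    ParseTree R w' := h ▸ t

def starList {R : RegularExpression α} : ∀ {w : List α},
    ParseTree R.star w → List ((u : List α) × ParseTree R u)
  | _, .starNil => []
  | _, .starCons (u := u) t s => ⟨u, t⟩ :: starList s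

theorem starList_cast {R : RegularExpression α} {w w' : List α} (h : w = w')
    (t : ParseTree R.star w) : starList (castWord h t) = starList t := by
  subst h; rfl

def sAppend {R : RegularExpression α} : ∀ {u v : List α},
    ParseTree R.star u → ParseTree R.star v → ParseTree R.star (u ++ v)
  | _, v, .starNil, t => t
  | _, v, .starCons (u := u₀) (v := v₀) a s, t =>
      castWord (List.append_assoc u₀ v₀ v).symm (.starCons a (sAppend s t))

theorem starList_sAppend {R : RegularExpression α} : ∀ {u v : List α}
    (s : ParseTree R.star u) (t : ParseTree R.star v),
    starList (sAppend s t) = starList s ++ starList t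
  | _, v, .starNil, t => by simp [sAppend, starList]
  | _, v, .starCons a s, t => by
      simp [sAppend, starList_cast, starList, starList_sAppend s t]

def powTree {R : RegularExpression α} {w : List α} (A : ParseTree R.star w) :
    ∀ n : ℕ, ParseTree R.star (wpow w n)
  | 0 => .starNil
  | n + 1 => sAppend A (powTree A n)

theorem starList_powTree {R : RegularExpression α} {w : List α} (A : ParseTree R.star w) :
    ∀ n : ℕ, starList (powTree A n) = wpow (starList A) n
  | 0 => by simp [powTree, starList, wpow]
  | n + 1 => by
      simp only [powTree, wpow, starList_sAppend, starList_powTree A n]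

theorem wpow_append (w : List α) : ∀ m n : ℕ, wpow w m ++ wpow w n = wpow w (m + n)
  | 0, n => by simp [wpow]
  | m + 1, n => by
      rw [show m + 1 + n = (m + n) + 1 by omega]
      simp only [wpow, List.append_assoc, wpow_append w m n]

theorem length_wpow (w : List α) : ∀ n : ℕ, (wpow w n).length = n * w.length
  | 0 => by simp [wpow]
  | n + 1 => by
      simp only [wpow, List.length_append, length_wpow w n]; ring

theorem wpow_mix_inj_aux {β : Type u} {p q : List β} (hpq : p ≠ q) {k i j : ℕ}
    (hij : i < j) (hjk : j ≤ k)
    (h : wpow p i ++ wpow q (k - i) = wpow p j ++ wpow q (k - j)) : False := by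
  by_cases hl : p.length = q.length
  · -- equal lengths: positional argument
    have hj' : wpow p j = wpow p i ++ wpow p (j - i) := by
      rw [wpow_append, show i + (j - i) = j by omega]
    rw [hj', List.append_assoc] at h
    have h4 : wpow q (k - i) = wpow p (j - i) ++ wpow q (k - j) := List.append_cancel_left h
    have e1 : k - i = (k - i - 1) + 1 := by omega
    have e2 : j - i = (j - i - 1) + 1 := by omega
    rw [e1, e2] at h4
    simp only [wpow] at h4
    rw [List.append_assoc] at h4
    have h5 := congrArg (List.take q.length) h4
    rw [List.take_left, ← hl, List.take_left] at h5
    exact hpq h5.symm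
  · -- different lengths: length argument
    have hlen := congrArg List.length h
    simp only [List.length_append, length_wpow] at hlen
    set a := p.length with ha
    set b := q.length with hb
    set d := j - i with hd
    have e1 : (k - i) * b = (k - j) * b + d * b := by
      rw [show k - i = (k - j) + d by omega, Nat.add_mul]
    have e2 : j * a = i * a + d * a := by
      rw [show j = i + d by omega, Nat.add_mul]
    have h3 : d * b = d * a := by linarith
    exact hl (Nat.eq_of_mul_eq_mul_left (show 0 < d by omega) h3.symm)

theorem pump {R : RegularExpression α} {w : List α} (A B : ParseTree R.star w)
    (hne : starList A ≠ starList B) : InfinitelyAmbiguous R.star := by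
  intro k
  refine ⟨wpow w k, ?_⟩
  have hcast : ∀ j : Fin (k + 1), wpow w (j : ℕ) ++ wpow w (k - (j : ℕ)) = wpow w k := by
    intro j
    rw [wpow_append, show (j : ℕ) + (k - (j : ℕ)) = k by omega]
  set f : Fin (k + 1) → ParseTree R.star (wpow w k) := fun j =>
    castWord (hcast j) (sAppend (powTree A (j : ℕ)) (powTree B (k - (j : ℕ)))) with hf
  have hsl : ∀ j : Fin (k + 1),
      starList (f j) = wpow (starList A) (j : ℕ) ++ wpow (starList B) (k - (j : ℕ)) := by
    intro j
    rw [hf]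
    simp only [starList_cast, starList_sAppend, starList_powTree]
  have finj : Function.Injective f := by
    intro i j hij
    have h2 : starList (f i) = starList (f j) := by rw [hij]
    rw [hsl i, hsl j] at h2
    rcases lt_trichotomy (i : ℕ) (j : ℕ) with hlt | heq | hlt
    · exact absurd h2 (fun h2 => wpow_mix_inj_aux hne hlt (by omega) h2)
    · exact Fin.ext heq
    · exact absurd h2.symm (fun h2 => wpow_mix_inj_aux hne hlt (by omega) h2)
  refine ⟨(List.finRange (k + 1)).map f, (List.nodup_finRange _).map finj, ?_⟩
  simp

theorem star_dest {R : RegularExpression α} {w : List α} (s : ParseTree R.star w) :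
    (∃ h : w = [], s = castWord h.symm .starNil) ∨
    ∃ (u v : List α) (h : w = u ++ v) (t : ParseTree R u) (s' : ParseTree R.star v),
      s = castWord h.symm (.starCons t s') := by
  cases s with
  | starNil => exact Or.inl ⟨rfl, rfl⟩
  | starCons t s' => exact Or.inr ⟨_, _, rfl, t, s', rfl⟩

theorem star_unamb {R : RegularExpression α} (hR : Unambiguous R)
    (he : [] ∉ R.matches') (hov : ¬ Overlaps R.matches' R.star.matches') :
    Unambiguous R.star := by
  have main : ∀ (n : ℕ) (w : List α), w.length ≤ n → ∀ s₁ s₂ : ParseTree R.star w, s₁ = s₂ := by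
    intro n
    induction n with
    | zero =>
        intro w hw s₁ s₂
        have hwnil : w = [] := List.eq_nil_of_length_eq_zero (Nat.le_zero.mp hw)
        subst hwnil
        rcases star_dest s₁ with ⟨h1, rfl⟩ | ⟨u, v, h1, t, s', rfl⟩
        · rcases star_dest s₂ with ⟨h2, rfl⟩ | ⟨u, v, h2, t, s', rfl⟩
          · rfl
          · obtain ⟨rfl, -⟩ := List.append_eq_nil_iff.mp h2.symm
            exact absurd (PT_toMatch t) he
        · obtain ⟨rfl, -⟩ := List.append_eq_nil_iff.mp h1.symm
          exact absurd (PT_toMatch t) he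
    | succ n ih =>
        intro w hw s₁ s₂
        rcases star_dest s₁ with ⟨h1, rfl⟩ | ⟨u₁, v₁, h1, t₁, s₁', rfl⟩
        · subst h1
          rcases star_dest s₂ with ⟨h2, rfl⟩ | ⟨u, v, h2, t, s', rfl⟩
          · rfl
          · obtain ⟨rfl, -⟩ := List.append_eq_nil_iff.mp h2.symm
            exact absurd (PT_toMatch t) he
        · subst h1
          rcases star_dest s₂ with ⟨h2, rfl⟩ | ⟨u₂, v₂, h2, t₂, s₂', rfl⟩
          · obtain ⟨rfl, -⟩ := List.append_eq_nil_iff.mp h2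
            exact absurd (PT_toMatch t₁) he
          · have hu₁ : u₁ ≠ [] := fun hh => he (hh ▸ PT_toMatch t₁)
            rcases List.append_eq_append_iff.mp h2 with ⟨a, ha₁, ha₂⟩ | ⟨a, ha₁, ha₂⟩
            · rcases eq_or_ne a [] with rfl | hane
              · rw [List.append_nil] at ha₁
                rw [List.nil_append] at ha₂
                have hv : v₁.length ≤ n := by
                  rw [List.length_append] at hw
                  have hu : 0 < u₁.length := List.length_pos_iff.mpr hu₁
                  omega
                subst ha₁; subst ha₂
                show ParseTree.starCons t₁ s₁' = ParseTree.starCons t₂ s₂'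
                rw [hR _ t₁ t₂, ih _ hv s₁' s₂']
              · exact absurd ⟨_, _, a, hane, PT_toMatch t₁, ha₁ ▸ PT_toMatch t₂,
                  ha₂ ▸ PT_toMatch s₁', PT_toMatch s₂'⟩ hov
            · rcases eq_or_ne a [] with rfl | hane
              · rw [List.append_nil] at ha₁
                rw [List.nil_append] at ha₂
                have hv : v₂.length ≤ n := by
                  rw [List.length_append] at hw
                  have hu0 : u₂ ≠ [] := fun hh => he (hh ▸ PT_toMatch t₂)
                  have hu : 0 < u₂.length := List.length_pos_iff.mpr hu0
                  have hlen := congrArg List.length h2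
                  rw [List.length_append, List.length_append] at hlen
                  omega
                subst ha₁; subst ha₂
                show ParseTree.starCons t₁ s₁' = ParseTree.starCons t₂ s₂'
                rw [hR _ t₁ t₂, ih _ hv s₁' s₂']
              · exact absurd ⟨_, _, a, hane, PT_toMatch t₂, ha₁ ▸ PT_toMatch t₁,
                  ha₂ ▸ PT_toMatch s₂', PT_toMatch s₁'⟩ hov
  intro w s₁ s₂
  exact main w.length w le_rfl s₁ s₂

/-- Theorem 3(a): for unambiguous `R`, the star `R*` is infinitely ambiguous
iff `ε ∈ L(R)` or `L(R)` and `L(R*)` overlap. -/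
theorem stmt_4 {α : Type u} (R : RegularExpression α) (h : Unambiguous R) :
    InfinitelyAmbiguous R.star ↔
      ([] ∈ R.matches' ∨ Overlaps R.matches' R.star.matches') := by
  constructor
  · intro hinf
    by_contra hcon
    push_neg at hcon
    obtain ⟨he, hov⟩ := hcon
    have hu := star_unamb h he hov
    obtain ⟨w, l, hnd, hlen⟩ := hinf 1
    rcases l with _ | ⟨t₁, l⟩
    · simp at hlen
    rcases l with _ | ⟨t₂, l⟩
    · simp at hlen
    rw [List.nodup_cons] at hnd
    exact hnd.1 (hu w t₁ t₂ ▸ List.mem_cons_self)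
  · rintro (he | ⟨x, y, a, hane, hx, hxa, hay, hy⟩)
    · obtain ⟨t⟩ := PT_nonempty R [] he
      exact pump ParseTree.starNil (ParseTree.starCons t ParseTree.starNil)
        (by simp [starList])
    · obtain ⟨tx⟩ := PT_nonempty R x hx
      obtain ⟨txa⟩ := PT_nonempty R (x ++ a) hxa
      obtain ⟨say⟩ := PT_nonempty R.star (a ++ y) hay
      obtain ⟨sy⟩ := PT_nonempty R.star y hy
      refine pump (ParseTree.starCons tx say)
        (castWord (List.append_assoc x a y) (ParseTree.starCons txa sy)) ?_
      rw [starList_cast]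
      simp only [starList]
      intro hcon
      obtain ⟨h1, -⟩ := List.cons.inj hcon
      have h2 : x = x ++ a := congrArg Sigma.fst h1
      have h3 := congrArg List.length h2
      rw [List.length_append] at h3
      have : a = [] := List.eq_nil_of_length_eq_zero (by omega)
      exact hane this
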